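/- Adjointness of separating multiplication and the guarded magic wand: for a qualitative expectation φ and one-bounded expectations X, Y, one has X ⋆ φ ≤ Y if and only if X ≤ φ -⋆ Y. -/

import Mathlib

open ENNReal

abbrev Heap := ℤ → Option ℤ
abbrev Stack := String → ℤ
abbrev PState := Stack × Heap
abbrev Exp := PState → ℝ≥0∞

/-- Heaps are disjoint if their domains are disjoint. -/
def HDisj (h₁ h₂ : Heap) : Prop := ∀ l, h₁ l = none ∨ h₂ l = none

/-- Disjoint union of heaps. -/
def HJoin (h₁ h₂ : Heap) : Heap := fun l => (h₁ l).orElse (fun _ => h₂ l)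

/-- Separating multiplication: (X ⋆ Y)(s,h) = sup { X(s,h₁)·Y(s,h₂) | h₁ ⋆ h₂ = h }. -/
noncomputable def sepMul (X Y : Exp) : Exp := fun σ =>
  ⨆ h₁, ⨆ h₂, ⨆ (_ : HDisj h₁ h₂ ∧ HJoin h₁ h₂ = σ.2), X (σ.1, h₁) * Y (σ.1, h₂)

/-- One-bounded expectations take values in [0,1]. -/
def OneBounded (X : Exp) : Prop := ∀ σ, X σ ≤ 1

/-- Qualitative expectations take values in {0,1}. -/
def Qualitative (φ : Exp) : Prop := ∀ σ, φ σ = 0 ∨ φ σ = 1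

/-- Guarded magic wand: (φ -⋆ X)(s,h) = inf { X(s, h ⋆ h') | φ(s,h') = 1, h' ⊥ h },
with the infimum of the empty set being 1 (for one-bounded X). -/
noncomputable def wand (φ X : Exp) : Exp := fun σ =>
  (⨅ h' : {h' : Heap // φ (σ.1, h') = 1 ∧ HDisj σ.2 h'}, X (σ.1, HJoin σ.2 h'.1)) ⊓ 1

theorem sepMul_wand_adjoint (φ X Y : Exp)
    (hφ : Qualitative φ) (hX : OneBounded X) (hY : OneBounded Y) :
    (∀ σ, sepMul X φ σ ≤ Y σ) ↔ (∀ σ, X σ ≤ wand φ Y σ) := by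
  constructor
  · intro h σ
    refine le_inf (le_iInf fun h' => ?_) (hX σ)
    obtain ⟨h', hφ1, hdisj⟩ := h'
    calc X σ = X (σ.1, σ.2) * φ (σ.1, h') := by rw [hφ1, mul_one]
      _ ≤ sepMul X φ (σ.1, HJoin σ.2 h') := by
          refine le_iSup_of_le σ.2 (le_iSup_of_le h' ?_)
          exact le_iSup_of_le ⟨hdisj, rfl⟩ le_rfl
      _ ≤ Y (σ.1, HJoin σ.2 h') := h _
  · intro h σ
    refine iSup_le fun h₁ => iSup_le fun h₂ => iSup_le fun ⟨hd, hj⟩ => ?_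
    rcases hφ (σ.1, h₂) with h0 | h1
    · simp [h0]
    · rw [h1, mul_one]
      calc X (σ.1, h₁) ≤ wand φ Y (σ.1, h₁) := h _
        _ ≤ ⨅ h' : {h' : Heap // φ (σ.1, h') = 1 ∧ HDisj h₁ h'}, Y (σ.1, HJoin h₁ h'.1) :=
            inf_le_left
        _ ≤ Y (σ.1, HJoin h₁ h₂) := iInf_le _ (⟨h₂, h1, hd⟩ : {h' : Heap // φ (σ.1, h') = 1 ∧ HDisj h₁ h'})
        _ = Y σ := by rw [hj]
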